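/- Fix integers n ≥ 1 and m ≥ 1, let I = (Fin m → Fin n) and D = n^m. For a tuple σ : Fin m → Equiv.Perm (Fin n), let Π_σ : Equiv.Perm I be the blockwise permutation x ↦ (fun b => σ b (x b)) and P_σ : Matrix I I ℂ its permutation matrix. Then for every matrix U in the unitary group of Matrix I I ℂ, every x* : I, and every vector φ : I → ℂ with Σ_x ‖φ x‖² = 1, the average over all (n!)^m tuples σ satisfies (1/(n!)^m) Σ_σ ‖(((P_σ)ᴴ · U) *ᵥ φ) x*‖² = 1/D. -/

import Mathlib

open Matrix

lemma fiber_card_mul (n : ℕ) (a i : Fin n) :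
    Fintype.card {π : Equiv.Perm (Fin n) // π a = i} * n = n.factorial := by
  classical
  have key : ∀ j : Fin n, Fintype.card {π : Equiv.Perm (Fin n) // π a = j}
      = Fintype.card {π : Equiv.Perm (Fin n) // π a = a} := by
    intro j
    refine Fintype.card_congr
      ⟨fun π => ⟨π.1.trans (Equiv.swap j a), by simp [π.2]⟩,
       fun π => ⟨π.1.trans (Equiv.swap j a), by simp [π.2]⟩, ?_, ?_⟩ <;>
      (intro π; ext x; simp)
  have hcard : Fintype.card (Equiv.Perm (Fin n)) =
      ∑ j : Fin n, Fintype.card {π : Equiv.Perm (Fin n) // π a = j} := by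
    rw [← Fintype.card_sigma]
    exact Fintype.card_congr (Equiv.sigmaFiberEquiv fun π : Equiv.Perm (Fin n) => π a).symm
  have h2 : ∑ j : Fin n, Fintype.card {π : Equiv.Perm (Fin n) // π a = j}
      = Fintype.card {π : Equiv.Perm (Fin n) // π a = i} * n := by
    simp [key, Finset.sum_const, mul_comm]
  rw [← h2, ← hcard, Fintype.card_perm, Fintype.card_fin]

/-- Blockwise permutation twirl (scalar form): for any unitary `U`, any target
basis label `x*`, and any unit vector `φ`, the success probability
`|⟨x*| P_σᴴ U |φ⟩|²`, averaged over independent uniform per-block permutations,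
equals `1/D` with `D = n^m`. -/
theorem blockwise_permutation_twirl_scalar (n m : ℕ) (hn : 1 ≤ n) (hm : 1 ≤ m)
    (P : (Fin m → Equiv.Perm (Fin n)) →
      Matrix (Fin m → Fin n) (Fin m → Fin n) ℂ)
    (hP : ∀ σ x y, P σ x y = if x = (fun b => σ b (y b)) then 1 else 0)
    (U : Matrix.unitaryGroup (Fin m → Fin n) ℂ) (xstar : Fin m → Fin n)
    (φ : (Fin m → Fin n) → ℂ) (hφ : ∑ x, ‖φ x‖ ^ 2 = 1) :
    (((n.factorial : ℝ)) ^ m)⁻¹ * ∑ σ : Fin m → Equiv.Perm (Fin n),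
        ‖((((P σ)ᴴ * (U : Matrix (Fin m → Fin n) (Fin m → Fin n) ℂ)) *ᵥ φ) xstar)‖ ^ 2 =
      (((n : ℝ)) ^ m)⁻¹ := by
  classical
  set ψ : (Fin m → Fin n) → ℂ := (U : Matrix (Fin m → Fin n) (Fin m → Fin n) ℂ) *ᵥ φ with hψdef
  have hA : ∀ σ : Fin m → Equiv.Perm (Fin n),
      ((((P σ)ᴴ * (U : Matrix (Fin m → Fin n) (Fin m → Fin n) ℂ)) *ᵥ φ) xstar)
        = ψ (fun b => σ b (xstar b)) := by
    intro σ
    rw [← Matrix.mulVec_mulVec]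
    simp only [hψdef, Matrix.mulVec, dotProduct, Matrix.conjTranspose_apply, hP]
    simp [apply_ite, ite_mul, Finset.sum_ite_eq']
  have hUU : (U : Matrix (Fin m → Fin n) (Fin m → Fin n) ℂ)ᴴ
      * (U : Matrix (Fin m → Fin n) (Fin m → Fin n) ℂ) = 1 := by
    have := U.2.1
    rwa [Matrix.star_eq_conjTranspose] at this
  have hsq : ∀ v : (Fin m → Fin n) → ℂ,
      dotProduct (star v) v = ((∑ x, ‖v x‖ ^ 2 : ℝ) : ℂ) := by
    intro v
    push_cast
    simp only [dotProduct, Pi.star_apply, RCLike.star_def]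
    refine Finset.sum_congr rfl fun x _ => ?_
    rw [mul_comm, Complex.mul_conj, Complex.normSq_eq_norm_sq]
    push_cast
    ring
  have hdot : dotProduct (star ψ) ψ = dotProduct (star φ) φ := by
    rw [hψdef, Matrix.star_mulVec, Matrix.dotProduct_mulVec, Matrix.vecMul_vecMul, hUU,
      Matrix.vecMul_one]
  have hψnorm : ∑ x, ‖ψ x‖ ^ 2 = 1 := by
    have := hdot
    rw [hsq, hsq, hφ] at this
    exact_mod_cast this
  have hn0 : (n : ℝ) ≠ 0 := by positivity
  have hf0 : ((n.factorial : ℝ)) ≠ 0 := by positivity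
  have hcardfiber : ∀ x : Fin m → Fin n,
      ((Fintype.card {σ : Fin m → Equiv.Perm (Fin n) //
        (fun b => σ b (xstar b)) = x} : ℝ)) = ((n.factorial : ℝ) / n) ^ m := by
    intro x
    have e1 : {σ : Fin m → Equiv.Perm (Fin n) // (fun b => σ b (xstar b)) = x}
        ≃ ∀ b, {π : Equiv.Perm (Fin n) // π (xstar b) = x b} :=
      (Equiv.subtypeEquivRight (fun σ => funext_iff)).trans
        (Equiv.subtypePiEquivPi (p := fun b (π : Equiv.Perm (Fin n)) => π (xstar b) = x b))
    rw [Fintype.card_congr e1, Fintype.card_pi]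
    push_cast
    have hb : ∀ b : Fin m,
        ((Fintype.card {π : Equiv.Perm (Fin n) // π (xstar b) = x b} : ℝ))
          = (n.factorial : ℝ) / n := by
      intro b
      have := fiber_card_mul n (xstar b) (x b)
      field_simp
      exact_mod_cast this
    rw [Finset.prod_congr rfl (fun b _ => hb b), Finset.prod_const, Finset.card_univ,
      Fintype.card_fin]
  have hC : ∑ σ : Fin m → Equiv.Perm (Fin n), ‖ψ (fun b => σ b (xstar b))‖ ^ 2
      = ∑ x : Fin m → Fin n, ((Fintype.card {σ : Fin m → Equiv.Perm (Fin n) //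
          (fun b => σ b (xstar b)) = x} : ℝ)) * ‖ψ x‖ ^ 2 := by
    rw [← Fintype.sum_fiberwise' (fun σ : Fin m → Equiv.Perm (Fin n) => fun b => σ b (xstar b))
      (fun x => ‖ψ x‖ ^ 2)]
    refine Finset.sum_congr rfl fun x _ => ?_
    rw [Finset.sum_const, Finset.card_univ, nsmul_eq_mul]
  simp only [hA]
  rw [hC]
  simp only [hcardfiber]
  rw [← Finset.mul_sum, hψnorm, mul_one, div_pow]
  field_simp
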